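/- arXiv:2105.06357 — 2 statements merged into one kernel-verified Lean document; each statement's English description precedes it below -/
import Mathlib

section
/- For any undirected graph G, the minimum running buffer of its bidirected dependency graph satisfies MinVS(G) ≤ MRB(G^ℓ) ≤ MinVS(G) + 1, where both minima are taken over all linear orderings of the vertices. -/
/-- The set of buffered vertices when the vertices in `S` have been processed:
vertices in `S` with an out-arc to an unprocessed vertex. -/
def bufferSet {V : Type*} [Fintype V] [DecidableEq V] (arc : V → V → Prop) [DecidableRel arc]
    (S : Finset V) : Finset V :=
  S.filter (fun u => ∃ v, v ∉ S ∧ arc u v)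

/-- The running buffer size of the ordering `l` on the digraph with arc relation `arc`:
the peak buffer occupancy, accounting for the momentary extra buffer slot when the newly
processed vertex itself enters the buffer before previously buffered vertices exit. -/
def RB {V : Type*} [Fintype V] [DecidableEq V] (arc : V → V → Prop) [DecidableRel arc]
    (l : List V) : ℕ :=
  (List.range l.length).foldl
    (fun m k =>
      let Sold := (l.take k).toFinset
      let Snew := (l.take (k + 1)).toFinset
      let tc : ℕ := if Snew \ Sold ⊆ bufferSet arc Snew then 1 else 0
      max m (max (bufferSet arc Snew).card ((bufferSet arc Sold).card + tc))) 0

/-- The minimum running buffer of a digraph: minimum of `RB` over all linear orderings. -/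
noncomputable def MRB {V : Type*} [Fintype V] [DecidableEq V] (arc : V → V → Prop)
    [DecidableRel arc] : ℕ :=
  sInf {k | ∃ l : List V, l.Nodup ∧ (∀ v, v ∈ l) ∧ RB arc l = k}
/-- The vertex separation value of a linear ordering `l` for the adjacency relation `adj`. -/
def VS {V : Type*} [Fintype V] [DecidableEq V] (adj : V → V → Prop) [DecidableRel adj]
    (l : List V) : ℕ :=
  (List.range l.length).foldl
    (fun m k => max m (bufferSet adj ((l.take (k + 1)).toFinset)).card) 0

/-- The vertex separation number: minimum of `VS` over all linear orderings. -/
noncomputable def MinVS {V : Type*} [Fintype V] [DecidableEq V] (adj : V → V → Prop)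
    [DecidableRel adj] : ℕ :=
  sInf {k | ∃ l : List V, l.Nodup ∧ (∀ v, v ∈ l) ∧ VS adj l = k}


section Aux

lemma le_foldl_max (f : ℕ → ℕ) (L : List ℕ) (a : ℕ) :
    a ≤ L.foldl (fun m k => max m (f k)) a := by
  induction L generalizing a with
  | nil => simp
  | cons x xs ih => exact le_trans (le_max_left a (f x)) (ih _)

lemma mem_le_foldl_max (f : ℕ → ℕ) (L : List ℕ) {k : ℕ} (hk : k ∈ L) (a : ℕ) :
    f k ≤ L.foldl (fun m k => max m (f k)) a := by
  induction L generalizing a with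
  | nil => simp at hk
  | cons x xs ih =>
    rcases List.mem_cons.mp hk with h | h
    · subst h; exact le_trans (le_max_right a (f k)) (le_foldl_max f xs _)
    · exact ih h _

lemma foldl_max_le {f : ℕ → ℕ} {L : List ℕ} {a b : ℕ} (hab : a ≤ b)
    (h : ∀ k ∈ L, f k ≤ b) : L.foldl (fun m k => max m (f k)) a ≤ b := by
  induction L generalizing a with
  | nil => simpa
  | cons x xs ih =>
    exact ih (max_le hab (h x (by simp))) (fun k hk => h k (by simp [hk]))

variable {V : Type*} [Fintype V] [DecidableEq V]

lemma vs_term_le (adj : V → V → Prop) [DecidableRel adj] (l : List V) {k : ℕ}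
    (hk : k < l.length) :
    (bufferSet adj ((l.take (k + 1)).toFinset)).card ≤ VS adj l :=
  mem_le_foldl_max (fun k => (bufferSet adj ((l.take (k + 1)).toFinset)).card)
    (List.range l.length) (List.mem_range.mpr hk) 0

lemma vs_le_rb (arc : V → V → Prop) [DecidableRel arc] (l : List V) :
    VS arc l ≤ RB arc l := by
  unfold VS RB
  refine foldl_max_le (Nat.zero_le _) (fun k hk => ?_)
  refine le_trans (le_max_left _ ((bufferSet arc ((l.take k).toFinset)).card +
      (if (l.take (k+1)).toFinset \ (l.take k).toFinset ⊆
        bufferSet arc ((l.take (k+1)).toFinset) then 1 else 0)))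
    (mem_le_foldl_max
      (fun k => max (bufferSet arc ((l.take (k+1)).toFinset)).card
        ((bufferSet arc ((l.take k).toFinset)).card +
          (if (l.take (k+1)).toFinset \ (l.take k).toFinset ⊆
            bufferSet arc ((l.take (k+1)).toFinset) then 1 else 0))) _ hk 0)

lemma rb_le_vs (arc : V → V → Prop) [DecidableRel arc] (l : List V) :
    RB arc l ≤ VS arc l + 1 := by
  unfold RB
  refine foldl_max_le (Nat.zero_le _) (fun k hk => ?_)
  rw [List.mem_range] at hk
  refine max_le (le_trans (vs_term_le arc l hk) (Nat.le_succ _)) ?_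
  have h1 : (bufferSet arc ((l.take k).toFinset)).card ≤ VS arc l := by
    cases k with
    | zero => simp [bufferSet]
    | succ j => exact vs_term_le arc l (by omega)
  have h2 : (if (l.take (k+1)).toFinset \ (l.take k).toFinset ⊆
      bufferSet arc ((l.take (k+1)).toFinset) then (1:ℕ) else 0) ≤ 1 := by
    split <;> omega
  omega

end Aux

/-- For any undirected graph `G`, the minimum running buffer of its
bidirected dependency graph satisfies `MinVS(G) ≤ MRB(G^ℓ) ≤ MinVS(G) + 1`. -/
theorem minvs_le_mrb_le_minvs_add_one {V : Type*} [Fintype V] [DecidableEq V]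
    (G : SimpleGraph V) [DecidableRel G.Adj] :
    MinVS G.Adj ≤ MRB G.Adj ∧ MRB G.Adj ≤ MinVS G.Adj + 1 := by
  have hne_r : {k | ∃ l : List V, l.Nodup ∧ (∀ v, v ∈ l) ∧ RB G.Adj l = k}.Nonempty :=
    ⟨_, Finset.univ.toList, Finset.nodup_toList _, fun v => by simp, rfl⟩
  have hne_v : {k | ∃ l : List V, l.Nodup ∧ (∀ v, v ∈ l) ∧ VS G.Adj l = k}.Nonempty :=
    ⟨_, Finset.univ.toList, Finset.nodup_toList _, fun v => by simp, rfl⟩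
  constructor
  · obtain ⟨l, hnd, hall, hrb⟩ := Nat.sInf_mem hne_r
    calc MinVS G.Adj ≤ VS G.Adj l := Nat.sInf_le ⟨l, hnd, hall, rfl⟩
      _ ≤ RB G.Adj l := vs_le_rb _ _
      _ = MRB G.Adj := hrb
  · obtain ⟨l, hnd, hall, hvs⟩ := Nat.sInf_mem hne_v
    calc MRB G.Adj ≤ RB G.Adj l := Nat.sInf_le ⟨l, hnd, hall, rfl⟩
      _ ≤ VS G.Adj l + 1 := rb_le_vs _ _
      _ = MinVS G.Adj + 1 := by rw [hvs]; rfl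
end

section
/- For the bidirected complete bipartite dependency structure (the 'thin cuboids' instance): in the unlabeled rearrangement instance whose dependency graph is the complete bipartite graph K_{n,n} between n start and n goal vertices, every plan requires exactly n − 1 running buffers. -/
/-- A pick-n-place move in an unlabeled rearrangement instance with start vertices `S`
and goal vertices `G`: move the object at start `s` to the buffer, move a buffered
object to goal `g`, or move the object at start `s` directly to goal `g`. -/
inductive UMove (S G : Type*) where
  | toBuffer (s : S)
  | fromBuffer (g : G)
  | direct (s : S) (g : G)

/-- Effect of a move on the state `(R, F)`, where `R` is the set of start vertices whose
objects have been removed and `F` is the set of filled goal vertices.  The number of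
buffered objects in state `(R, F)` is `R.card - F.card`. -/
def ustep {S G : Type*} [DecidableEq S] [DecidableEq G] :
    UMove S G → Finset S × Finset G → Finset S × Finset G
  | .toBuffer s, (R, F) => (insert s R, F)
  | .fromBuffer g, (R, F) => (R, insert g F)
  | .direct s g, (R, F) => (insert s R, insert g F)

/-- The state reached after executing the moves in `l` from state `st`. -/
def uStateAfter {S G : Type*} [DecidableEq S] [DecidableEq G]
    (l : List (UMove S G)) (st : Finset S × Finset G) : Finset S × Finset G :=
  l.foldl (fun st m => ustep m st) st

/-- Validity of a sequence of moves from state `st`, for the bipartite dependency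
relation `adj` (`adj s g` meaning the disk at start `s` overlaps the disk at goal `g`):
an object can only be removed from a start once; a goal `g` can be filled from the
buffer only if the buffer is nonempty and all starts overlapping `g` have been cleared;
an object can be moved directly from start `s` to goal `g` only if all starts
overlapping `g` other than `s` itself have been cleared. -/
def uValidFrom {S G : Type*} [DecidableEq S] [DecidableEq G] (adj : S → G → Prop) :
    List (UMove S G) → Finset S × Finset G → Prop
  | [], _ => True
  | m :: rest, st =>
      (match m with
        | .toBuffer s => s ∉ st.1
        | .fromBuffer g => g ∉ st.2 ∧ st.2.card < st.1.card ∧ ∀ s, adj s g → s ∈ st.1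
        | .direct s g => s ∉ st.1 ∧ g ∉ st.2 ∧ ∀ s', adj s' g → s' ∈ insert s st.1) ∧
      uValidFrom adj rest (ustep m st)

/-- The peak buffer occupancy along the execution of `l` from state `st`. -/
def uPeakFrom {S G : Type*} [DecidableEq S] [DecidableEq G] :
    List (UMove S G) → Finset S × Finset G → ℕ
  | [], st => st.1.card - st.2.card
  | m :: rest, st => max (st.1.card - st.2.card) (uPeakFrom rest (ustep m st))

/-- A complete plan: a valid sequence of moves from the initial state which removes every
object from its start pose and fills every goal pose. -/
def UCompletePlan {S G : Type*} [DecidableEq S] [DecidableEq G] (adj : S → G → Prop)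
    (l : List (UMove S G)) : Prop :=
  uValidFrom adj l (∅, ∅) ∧
  (∀ s : S, s ∈ (uStateAfter l (∅, ∅)).1) ∧ (∀ g : G, g ∈ (uStateAfter l (∅, ∅)).2)

/-- The running buffer (peak buffer occupancy) of a plan. -/
def uPeak {S G : Type*} [DecidableEq S] [DecidableEq G] (l : List (UMove S G)) : ℕ :=
  uPeakFrom l (∅, ∅)

section
variable {S G : Type*} [DecidableEq S] [DecidableEq G]

lemma my_uStateAfter_cons (m : UMove S G) (l : List (UMove S G)) (st) :
    uStateAfter (m :: l) st = uStateAfter l (ustep m st) := rfl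

lemma my_uStateAfter_append (a b : List (UMove S G)) (st) :
    uStateAfter (a ++ b) st = uStateAfter b (uStateAfter a st) := by
  simp [uStateAfter, List.foldl_append]

lemma my_uValidFrom_append (adj : S → G → Prop) (a b : List (UMove S G)) (st) :
    uValidFrom adj (a ++ b) st ↔
      uValidFrom adj a st ∧ uValidFrom adj b (uStateAfter a st) := by
  induction a generalizing st with
  | nil => simp [uValidFrom, uStateAfter]
  | cons m rest ih =>
      simp only [List.cons_append, uValidFrom, List.append_eq, ih, my_uStateAfter_cons]
      tauto

lemma my_le_uPeakFrom (l : List (UMove S G)) (st) :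
    st.1.card - st.2.card ≤ uPeakFrom l st := by
  cases l with
  | nil => simp [uPeakFrom]
  | cons m rest => exact le_max_left _ _

lemma my_uPeakFrom_append (a b : List (UMove S G)) (st) :
    uPeakFrom (a ++ b) st = max (uPeakFrom a st) (uPeakFrom b (uStateAfter a st)) := by
  induction a generalizing st with
  | nil =>
      simp only [List.nil_append, uPeakFrom, uStateAfter, List.foldl_nil]
      exact (max_eq_right (my_le_uPeakFrom b st)).symm
  | cons m rest ih =>
      simp only [List.cons_append, uPeakFrom, List.append_eq, ih, my_uStateAfter_cons, max_assoc]

lemma my_toBuffer_state (ss : List S) (R : Finset S) (F : Finset G) :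
    uStateAfter (ss.map UMove.toBuffer) (R, F) = (R ∪ ss.toFinset, F) := by
  induction ss generalizing R with
  | nil => simp [uStateAfter]
  | cons s rest ih =>
      simp only [List.map_cons, my_uStateAfter_cons, ustep, ih, List.toFinset_cons]
      rw [Finset.insert_union, Finset.union_insert]

lemma my_fromBuffer_state (gs : List G) (R : Finset S) (F : Finset G) :
    uStateAfter (gs.map UMove.fromBuffer) (R, F) = (R, F ∪ gs.toFinset) := by
  induction gs generalizing F with
  | nil => simp [uStateAfter]
  | cons g rest ih =>
      simp only [List.map_cons, my_uStateAfter_cons, ustep, ih, List.toFinset_cons]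
      rw [Finset.insert_union, Finset.union_insert]

lemma my_toBuffer_valid (adj : S → G → Prop) (ss : List S) (R : Finset S) (F : Finset G)
    (hnd : ss.Nodup) (hdisj : ∀ s ∈ ss, s ∉ R) :
    uValidFrom adj (ss.map UMove.toBuffer) (R, F) := by
  induction ss generalizing R with
  | nil => trivial
  | cons s rest ih =>
      refine ⟨hdisj s (by simp), ih _ (List.nodup_cons.1 hnd).2 ?_⟩
      intro t ht
      simp only [Finset.mem_insert, not_or]
      exact ⟨fun h => (List.nodup_cons.1 hnd).1 (h ▸ ht),
        hdisj t (List.mem_cons_of_mem _ ht)⟩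

lemma my_fromBuffer_valid (gs : List G) (R : Finset S) (F : Finset G)
    (hnd : gs.Nodup) (hdisj : ∀ g ∈ gs, g ∉ F)
    (hcard : F.card + gs.length ≤ R.card) (hR : ∀ s : S, s ∈ R) :
    uValidFrom (fun (_ : S) (_ : G) => True) (gs.map UMove.fromBuffer) (R, F) := by
  induction gs generalizing F with
  | nil => trivial
  | cons g rest ih =>
      have hg : g ∉ F := hdisj g (by simp)
      refine ⟨⟨hg, ?_, fun s _ => hR s⟩, ?_⟩
      · show F.card < R.card
        simp only [List.length_cons] at hcard; omega
      · refine ih _ (List.nodup_cons.1 hnd).2 ?_ ?_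
        · intro t ht
          simp only [Finset.mem_insert, not_or]
          exact ⟨fun h => (List.nodup_cons.1 hnd).1 (h ▸ ht),
            hdisj t (List.mem_cons_of_mem _ ht)⟩
        · rw [Finset.card_insert_of_notMem hg]
          simp only [List.length_cons] at hcard; omega

lemma my_toBuffer_peak (ss : List S) (R : Finset S) (F : Finset G) :
    uPeakFrom (ss.map UMove.toBuffer) (R, F) = (R ∪ ss.toFinset).card - F.card := by
  induction ss generalizing R with
  | nil => simp [uPeakFrom]
  | cons s rest ih =>
      simp only [List.map_cons, uPeakFrom, ustep, ih, List.toFinset_cons]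
      rw [Finset.insert_union, Finset.union_insert]
      have : R.card ≤ (insert s (R ∪ rest.toFinset)).card :=
        Finset.card_le_card (fun x hx => by simp [hx])
      exact max_eq_right (Nat.sub_le_sub_right this _)

lemma my_fromBuffer_peak (gs : List G) (R : Finset S) (F : Finset G) :
    uPeakFrom (gs.map UMove.fromBuffer) (R, F) = R.card - F.card := by
  induction gs generalizing F with
  | nil => simp [uPeakFrom]
  | cons g rest ih =>
      simp only [List.map_cons, uPeakFrom, ustep, ih]
      have : F.card ≤ (insert g F).card :=
        Finset.card_le_card (Finset.subset_insert _ _)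
      exact max_eq_left (Nat.sub_le_sub_left this _)

end
lemma my_lower_aux (n : ℕ) (l : List (UMove (Fin n) (Fin n))) :
    ∀ R : Finset (Fin n),
    uValidFrom (fun _ _ => True) l (R, ∅) →
    (∀ g : Fin n, g ∈ (uStateAfter l (R, ∅)).2) →
    n - 1 ≤ uPeakFrom l (R, ∅) := by
  induction l with
  | nil =>
      intro R _ hfill
      rcases Nat.eq_zero_or_pos n with h | h
      · simp [h]
      · exact absurd (hfill ⟨0, h⟩) (by simp [uStateAfter])
  | cons m rest ih =>
      intro R hval hfill
      match m with
      | .toBuffer s =>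
          refine le_trans (ih (insert s R) hval.2 ?_) (le_max_right _ _)
          intro g; exact hfill g
      | .fromBuffer g =>
          obtain ⟨⟨hg, hlt, hall⟩, -⟩ := hval
          have h1 : (Finset.univ : Finset (Fin n)) ⊆ R :=
            fun s _ => hall s trivial
          have h2 : n ≤ R.card := by
            simpa using Finset.card_le_card h1
          refine le_trans ?_ (le_max_left _ _)
          simp only [Finset.card_empty, Nat.sub_zero]
          omega
      | .direct s g =>
          obtain ⟨⟨hs, hg, hall⟩, -⟩ := hval
          have h1 : (Finset.univ : Finset (Fin n)) ⊆ insert s R :=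
            fun s' _ => hall s' trivial
          have h2 : n ≤ (insert s R).card := by
            simpa using Finset.card_le_card h1
          have h3 : (insert s R).card ≤ R.card + 1 := Finset.card_insert_le _ _
          refine le_trans ?_ (le_max_left _ _)
          simp only [Finset.card_empty, Nat.sub_zero]
          omega

/-- For the unlabeled rearrangement instance whose dependency graph is
the complete bipartite graph `K_{n,n}` between `n` start and `n` goal vertices (the
'thin cuboids' instance), the minimum running buffer equals `n - 1`: every complete plan
needs at least `n - 1` running buffers, and some complete plan achieves `n - 1`. -/
theorem unlabeled_complete_bipartite_mrb (n : ℕ) :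
    (∀ l : List (UMove (Fin n) (Fin n)),
        UCompletePlan (fun _ _ => True) l → n - 1 ≤ uPeak l) ∧
    (∃ l : List (UMove (Fin n) (Fin n)),
        UCompletePlan (fun _ _ => True) l ∧ uPeak l = n - 1) := by
  constructor
  · intro l hpl
    exact my_lower_aux n l ∅ hpl.1 hpl.2.2
  · match n with
    | 0 =>
        refine ⟨[], ⟨trivial, fun s => s.elim0, fun g => g.elim0⟩, rfl⟩
    | m + 1 =>
        set ss : List (Fin (m + 1)) := (List.finRange m).map Fin.castSucc with hss
        have hnd : ss.Nodup :=
          (List.nodup_finRange m).map (Fin.castSucc_injective m)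
        have hlen : ss.length = m := by simp [hss]
        set T : Finset (Fin (m + 1)) := ss.toFinset with hT
        have hmemT : ∀ x, x ∈ T ↔ ∃ i : Fin m, Fin.castSucc i = x := by
          intro x; simp [hT, hss]
        have hlastT : Fin.last m ∉ T := by
          rw [hmemT]
          rintro ⟨i, hi⟩
          exact absurd hi (Fin.castSucc_lt_last i).ne
        have huniv : insert (Fin.last m) T = Finset.univ := by
          apply Finset.eq_univ_iff_forall.2
          intro x
          rcases Fin.eq_castSucc_or_eq_last x with ⟨i, rfl⟩ | rfl
          · exact Finset.mem_insert_of_mem ((hmemT _).2 ⟨i, rfl⟩)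
          · exact Finset.mem_insert_self _ _
        have hTcard : T.card = m := by
          have := Finset.card_insert_of_notMem hlastT
          rw [huniv, Finset.card_univ] at this
          simpa using this.symm
        refine ⟨ss.map UMove.toBuffer ++
          (UMove.direct (Fin.last m) (Fin.last m) :: ss.map UMove.fromBuffer), ?_, ?_⟩
        · have hafter1 : uStateAfter (ss.map UMove.toBuffer)
              ((∅ : Finset (Fin (m+1))), (∅ : Finset (Fin (m+1)))) = (T, ∅) := by
            rw [my_toBuffer_state]; simp [hT]
          have hafter2 : uStateAfter (UMove.direct (Fin.last m) (Fin.last m) ::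
              ss.map UMove.fromBuffer) (T, ∅) =
              (Finset.univ, Finset.univ) := by
            rw [my_uStateAfter_cons]
            show uStateAfter (ss.map UMove.fromBuffer)
              (insert (Fin.last m) T, insert (Fin.last m) ∅) = _
            rw [my_fromBuffer_state, huniv, ← hT]
            have h2 : insert (Fin.last m) (∅ : Finset (Fin (m+1))) ∪ T = Finset.univ := by
              rw [Finset.insert_union, Finset.empty_union, huniv]
            rw [h2]
          refine ⟨?_, ?_, ?_⟩
          · rw [my_uValidFrom_append, hafter1]
            refine ⟨my_toBuffer_valid _ _ _ _ hnd (by simp), ?_⟩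
            refine ⟨⟨hlastT, by simp, fun s' _ => ?_⟩, ?_⟩
            · rw [huniv]; exact Finset.mem_univ _
            · show uValidFrom _ (ss.map UMove.fromBuffer)
                (insert (Fin.last m) T, insert (Fin.last m) ∅)
              rw [huniv]
              refine my_fromBuffer_valid _ _ _ hnd ?_ ?_ (fun s => Finset.mem_univ s)
              · intro g hg
                simp only [Finset.mem_insert, Finset.notMem_empty, or_false]
                rintro rfl
                exact hlastT (List.mem_toFinset.2 hg)
              · simp only [Finset.card_univ, Fintype.card_fin, hlen,
                  Finset.card_insert_of_notMem (Finset.notMem_empty _), Finset.card_empty]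
                omega
          · intro s
            rw [my_uStateAfter_append, hafter1, hafter2]
            exact Finset.mem_univ s
          · intro g
            rw [my_uStateAfter_append, hafter1, hafter2]
            exact Finset.mem_univ g
        · show uPeakFrom _ _ = _
          rw [my_uPeakFrom_append, my_toBuffer_state]
          have h1 : uPeakFrom (ss.map UMove.toBuffer)
              ((∅ : Finset (Fin (m+1))), (∅ : Finset (Fin (m+1)))) = m := by
            rw [my_toBuffer_peak]; simp [← hT, hTcard]
          rw [h1]
          have hTU : (∅ : Finset (Fin (m+1))) ∪ ss.toFinset = T := by simp [hT]
          rw [hTU]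
          show _ ⊔ (_ ⊔ uPeakFrom (ss.map UMove.fromBuffer)
            (insert (Fin.last m) T, insert (Fin.last m) ∅)) = _
          rw [huniv, my_fromBuffer_peak]
          simp only [Finset.card_univ, Fintype.card_fin, hTcard, Finset.card_empty,
            Finset.card_insert_of_notMem (Finset.notMem_empty _)]
          omega
end
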